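/- (Nilpotent perturbation, symmetric part) Let A, B be commuting d-tuples with δ^{m}_{A,B}(X) = 0, and let N_1 be an n_1-nilpotent commuting d-tuple and N_2 an n_2-nilpotent commuting d-tuple with [A, N_1] = [B, N_2] = 0. Then δ^{m+n_1+n_2−2}_{A+N_1, B+N_2}(X) = 0. -/

import Mathlib

/-- δ_{A,B}(Y) = (Σ_i A_i) Y − Y (Σ_i B_i). -/
noncomputable def deltaOp {E : Type*} [NormedAddCommGroup E] [NormedSpace ℂ E]
    {d : ℕ} (A B : Fin d → (E →L[ℂ] E)) : (E →L[ℂ] E) → (E →L[ℂ] E) :=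
  fun Y => (∑ i, A i) * Y - Y * (∑ i, B i)

/-- A commuting d-tuple N is n-nilpotent if every product of its entries of total degree n
vanishes. -/
def IsNilpotentTuple {E : Type*} [NormedAddCommGroup E] [NormedSpace ℂ E]
    {d : ℕ} (N : Fin d → (E →L[ℂ] E)) (n : ℕ) : Prop :=
  ∀ α : Fin d → ℕ, (∑ i, α i) = n → (List.ofFn fun i => (N i) ^ (α i)).prod = 0

lemma multiset_noncommProd_eq_list_prod {M : Type*} [Monoid M] (s : Multiset M) (hs)
    (l : List M) (hl : s = ↑l) : Multiset.noncommProd s hs = l.prod := by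
  subst hl; exact Multiset.noncommProd_coe l hs

lemma noncommProd_univ_eq_ofFn {M : Type*} [Monoid M] {d : ℕ} (f : Fin d → M)
    (h : ((Finset.univ : Finset (Fin d)) : Set (Fin d)).Pairwise (Function.onFun Commute f)) :
    Finset.univ.noncommProd f h = (List.ofFn f).prod :=
  multiset_noncommProd_eq_list_prod _ _ _ (Fin.univ_val_map f)

lemma sum_pow_eq_zero_of_nilpotentTuple {E : Type*} [NormedAddCommGroup E] [NormedSpace ℂ E]
    {d : ℕ} (N : Fin d → (E →L[ℂ] E)) (hN : ∀ i j, N i * N j = N j * N i)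
    {n : ℕ} (hnil : IsNilpotentTuple N n) : (∑ i, N i) ^ n = 0 := by
  have hc : ((Finset.univ : Finset (Fin d)) : Set (Fin d)).Pairwise (Function.onFun Commute N) :=
    fun i _ j _ _ => hN i j
  rw [Finset.sum_pow_eq_sum_piAntidiag_of_commute _ _ hc n]
  apply Finset.sum_eq_zero
  intro k hk
  rw [Finset.mem_piAntidiag] at hk
  rw [noncommProd_univ_eq_ofFn, hnil k hk.1, mul_zero]

lemma add_pow_eq_zero_of_commute {R : Type*} [Ring R] {x y : R} (h : Commute x y)
    {a b : ℕ} (hx : x ^ a = 0) (hy : y ^ b = 0) (ha : 0 < a) (hb : 0 < b) :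
    (x + y) ^ (a + b - 1) = 0 := by
  rw [h.add_pow']
  apply Finset.sum_eq_zero
  intro ij hij
  rw [Finset.HasAntidiagonal.mem_antidiagonal] at hij
  rcases le_or_gt a ij.1 with hle | hlt
  · have : x ^ ij.1 = 0 := by
      rw [← Nat.sub_add_cancel hle, pow_add, hx, mul_zero]
    rw [this, zero_mul, smul_zero]
  · have hle2 : b ≤ ij.2 := by omega
    have : y ^ ij.2 = 0 := by
      rw [← Nat.sub_add_cancel hle2, pow_add, hy, mul_zero]
    rw [this, mul_zero, smul_zero]

lemma sub_pow_eq_zero_of_commute {R : Type*} [Ring R] {x y : R} (h : Commute x y)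
    {a b : ℕ} (hx : x ^ a = 0) (hy : y ^ b = 0) (ha : 0 < a) (hb : 0 < b) :
    (x - y) ^ (a + b - 1) = 0 := by
  rw [sub_eq_add_neg]
  refine add_pow_eq_zero_of_commute h.neg_right hx ?_ ha hb
  rw [neg_pow, hy, mul_zero]

theorem stmt16 {E : Type*} [NormedAddCommGroup E] [NormedSpace ℂ E] [CompleteSpace E]
    {d : ℕ} (A B N₁ N₂ : Fin d → (E →L[ℂ] E))
    (hA : ∀ i j, A i * A j = A j * A i) (hB : ∀ i j, B i * B j = B j * B i)
    (hN₁ : ∀ i j, N₁ i * N₁ j = N₁ j * N₁ i) (hN₂ : ∀ i j, N₂ i * N₂ j = N₂ j * N₂ i)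
    (m n₁ n₂ : ℕ) (hm : 0 < m) (hn₁ : 0 < n₁) (hn₂ : 0 < n₂)
    (hnil₁ : IsNilpotentTuple N₁ n₁) (hnil₂ : IsNilpotentTuple N₂ n₂)
    (hAN : ∀ i j, A i * N₁ j = N₁ j * A i) (hBN : ∀ i j, B i * N₂ j = N₂ j * B i)
    (X : E →L[ℂ] E) (h : (deltaOp A B)^[m] X = 0) :
    (deltaOp (fun i => A i + N₁ i) (fun i => B i + N₂ i))^[m + n₁ + n₂ - 2] X = 0 := by
  set a : E →L[ℂ] E := ∑ i, A i with ha
  set b : E →L[ℂ] E := ∑ i, B i with hb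
  set p : E →L[ℂ] E := ∑ i, N₁ i with hp
  set q : E →L[ℂ] E := ∑ i, N₂ i with hq
  -- commutation of the sums
  have hap : a * p = p * a :=
    (Commute.sum_left _ _ _ fun i _ => Commute.sum_right _ _ _ fun j _ => (hAN i j : _)).eq
  have hbq : b * q = q * b :=
    (Commute.sum_left _ _ _ fun i _ => Commute.sum_right _ _ _ fun j _ => (hBN i j : _)).eq
  -- nilpotency of the sums
  have hpn : p ^ n₁ = 0 := sum_pow_eq_zero_of_nilpotentTuple N₁ hN₁ hnil₁
  have hqn : q ^ n₂ = 0 := sum_pow_eq_zero_of_nilpotentTuple N₂ hN₂ hnil₂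
  -- set up the endomorphisms
  set D : Module.End ℂ (E →L[ℂ] E) := LinearMap.mulLeft ℂ a - LinearMap.mulRight ℂ b with hD
  set T : Module.End ℂ (E →L[ℂ] E) := LinearMap.mulLeft ℂ p - LinearMap.mulRight ℂ q with hT
  have hDfun : deltaOp A B = ⇑D := by
    funext Y
    simp [deltaOp, hD, ha, hb]
  have hDTfun : deltaOp (fun i => A i + N₁ i) (fun i => B i + N₂ i) = ⇑(D + T) := by
    funext Y
    simp only [deltaOp, Finset.sum_add_distrib, hD, hT, LinearMap.add_apply,
      LinearMap.sub_apply, LinearMap.mulLeft_apply, LinearMap.mulRight_apply, ← ha, ← hb,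
      ← hp, ← hq]
    rw [add_mul, mul_add]
    abel
  have hmX : (D ^ m) X = 0 := by
    rw [Module.End.pow_apply, ← hDfun, h]
  -- Commute D T
  have hcomm : Commute D T := by
    have h1 : Commute (LinearMap.mulLeft ℂ a) (LinearMap.mulLeft ℂ p) :=
      LinearMap.ext fun Y => by
        simp only [Module.End.mul_apply, LinearMap.mulLeft_apply, ← mul_assoc, hap]
    have h2 : Commute (LinearMap.mulRight ℂ b) (LinearMap.mulRight ℂ q) :=
      LinearMap.ext fun Y => by
        simp only [Module.End.mul_apply, LinearMap.mulRight_apply, mul_assoc, hbq]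
    have h3 := LinearMap.commute_mulLeft_right (R := ℂ) a q
    have h4 := (LinearMap.commute_mulLeft_right (R := ℂ) p b).symm
    exact (h1.sub_right h3).sub_left (h4.sub_right h2)
  -- T is nilpotent of order n₁ + n₂ - 1
  have hLp : (LinearMap.mulLeft ℂ p) ^ n₁ = 0 := by
    rw [LinearMap.pow_mulLeft, hpn]
    exact LinearMap.mulLeft_zero_eq_zero ℂ (E →L[ℂ] E)
  have hRq : (LinearMap.mulRight ℂ q) ^ n₂ = 0 := by
    rw [LinearMap.pow_mulRight, hqn]
    exact LinearMap.mulRight_zero_eq_zero ℂ (E →L[ℂ] E)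
  have hTnil : T ^ (n₁ + n₂ - 1) = 0 := by
    have hc : Commute (LinearMap.mulLeft ℂ p) (-(LinearMap.mulRight ℂ q)) :=
      (LinearMap.commute_mulLeft_right (R := ℂ) p q).neg_right
    exact sub_pow_eq_zero_of_commute (LinearMap.commute_mulLeft_right p q) hLp hRq hn₁ hn₂
  -- main computation
  rw [hDTfun, ← Module.End.pow_apply, hcomm.add_pow']
  rw [LinearMap.sum_apply]
  apply Finset.sum_eq_zero
  intro ij hij
  rw [Finset.HasAntidiagonal.mem_antidiagonal] at hij
  rcases le_or_gt m ij.1 with hle | hlt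
  · have hD0 : (D ^ ij.1) X = 0 := by
      rw [← Nat.sub_add_cancel hle, pow_add, Module.End.mul_apply, hmX, map_zero]
    rw [LinearMap.smul_apply, (hcomm.pow_pow ij.1 ij.2).eq, Module.End.mul_apply, hD0,
      map_zero, smul_zero]
  · have hT0 : T ^ ij.2 = 0 := by
      have hle2 : n₁ + n₂ - 1 ≤ ij.2 := by omega
      rw [← Nat.sub_add_cancel hle2, pow_add, hTnil, mul_zero]
    rw [LinearMap.smul_apply, Module.End.mul_apply, hT0]
    simp
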